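/- Let 2 < p < q and f : [0,∞) → ℝ be as above (f(x) = a·x^p + b for x>1, f(x) = c·x^q for x≤1, with a+b=c, ap=cq, c>0). Let f̂ be the even extension of f to ℝ, i.e. f̂(x) = f(|x|). Then there exists K > 0 such that for all x, y ∈ ℝ: f̂(x) − f̂(y) − f̂'(y)·(x−y) ≥ K · min(|x−y|^p, |x−y|^q). -/

import Mathlib

open Real Set Filter intervalIntegral

/-- nonnegative branch profile -/
noncomputable def phiAux (P Q x : ℝ) : ℝ := if x ≤ 1 then x ^ Q else x ^ P

/-- odd extension -/
noncomputable def psiAux (P Q x : ℝ) : ℝ :=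
  if 0 ≤ x then phiAux P Q x else -phiAux P Q (-x)

lemma rpow_superadd {x y z : ℝ} (hx : 0 ≤ x) (hy : 0 ≤ y) (hz : 1 ≤ z) :
    x ^ z + y ^ z ≤ (x + y) ^ z := by
  rcases eq_or_lt_of_le (add_nonneg hx hy) with h | h
  · have hx0 : x = 0 := by nlinarith
    have hy0 : y = 0 := by nlinarith
    simp [hx0, hy0, Real.zero_rpow (by linarith : z ≠ 0)]
  · have hxz : x ^ z ≤ x * (x + y) ^ (z - 1) := by
      calc x ^ z = x ^ (1 + (z - 1)) := by ring_nf
        _ = x ^ (1:ℝ) * x ^ (z - 1) := Real.rpow_add' hx (by linarith)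
        _ ≤ x * (x + y) ^ (z - 1) := by
            rw [Real.rpow_one]
            exact mul_le_mul_of_nonneg_left
              (Real.rpow_le_rpow hx (by linarith) (by linarith)) hx
    have hyz : y ^ z ≤ y * (x + y) ^ (z - 1) := by
      calc y ^ z = y ^ (1 + (z - 1)) := by ring_nf
        _ = y ^ (1:ℝ) * y ^ (z - 1) := Real.rpow_add' hy (by linarith)
        _ ≤ y * (x + y) ^ (z - 1) := by
            rw [Real.rpow_one]
            exact mul_le_mul_of_nonneg_left
              (Real.rpow_le_rpow hy (by linarith) (by linarith)) hy
    calc x ^ z + y ^ z ≤ (x + y) * (x + y) ^ (z - 1) := by nlinarith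
      _ = (x + y) ^ (1 + (z - 1)) := by
          rw [Real.rpow_add h, Real.rpow_one]
      _ = (x + y) ^ z := by ring_nf

section aux

variable {P Q : ℝ} (hP : 1 ≤ P) (hPQ : P ≤ Q)

lemma phiAux_nonneg {x : ℝ} (hx : 0 ≤ x) : 0 ≤ phiAux P Q x := by
  unfold phiAux; split <;> exact Real.rpow_nonneg hx _

lemma phiAux_zero (hQ : Q ≠ 0) : phiAux P Q 0 = 0 := by
  simp [phiAux, Real.zero_rpow hQ]

include hP hPQ in
/-- core superadditivity of the profile -/
lemma phiAux_add {u δ : ℝ} (hu : 0 ≤ u) (hδ : 0 ≤ δ) :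
    phiAux P Q u + min (δ ^ P) (δ ^ Q) ≤ phiAux P Q (u + δ) := by
  have hQ1 : 1 ≤ Q := le_trans hP hPQ
  rcases le_or_gt (u + δ) 1 with h | h
  · have hu1 : u ≤ 1 := by linarith
    have : u ^ Q + δ ^ Q ≤ (u + δ) ^ Q := rpow_superadd hu hδ hQ1
    have hmin : min (δ ^ P) (δ ^ Q) ≤ δ ^ Q := min_le_right _ _
    simp only [phiAux, if_pos h, if_pos hu1]
    linarith
  · have huP : phiAux P Q u ≤ u ^ P := by
      unfold phiAux
      split
      · rcases eq_or_lt_of_le hu with h0 | h0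
        · simp [← h0, Real.zero_rpow (by linarith : Q ≠ 0),
            Real.zero_rpow (by linarith : P ≠ 0)]
        · exact Real.rpow_le_rpow_of_exponent_ge h0 (by assumption) hPQ
      · exact le_rfl
    have : u ^ P + δ ^ P ≤ (u + δ) ^ P := rpow_superadd hu hδ hP
    have hmin : min (δ ^ P) (δ ^ Q) ≤ δ ^ P := min_le_left _ _
    simp only [phiAux, if_neg (not_le.mpr h)]
    simp only [phiAux] at huP
    linarith

include hP hPQ in
lemma phiAux_mono {u v : ℝ} (hu : 0 ≤ u) (huv : u ≤ v) :
    phiAux P Q u ≤ phiAux P Q v := by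
  have h := phiAux_add hP hPQ hu (by linarith : (0:ℝ) ≤ v - u)
  have h2 : (0:ℝ) ≤ min ((v - u) ^ P) ((v - u) ^ Q) :=
    le_min (Real.rpow_nonneg (by linarith) _) (Real.rpow_nonneg (by linarith) _)
  have : u + (v - u) = v := by ring
  rw [this] at h
  linarith

lemma psiAux_neg (hQ : Q ≠ 0) (x : ℝ) : psiAux P Q (-x) = - psiAux P Q x := by
  rcases lt_trichotomy x 0 with h | h | h
  · rw [psiAux, if_pos (by linarith : (0:ℝ) ≤ -x), psiAux, if_neg (not_le.mpr h), neg_neg]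
  · simp [h, psiAux, phiAux_zero hQ]
  · rw [psiAux, if_neg (by simp only [Left.nonneg_neg_iff, not_le]; exact h),
      psiAux, if_pos h.le, neg_neg]

include hP hPQ in
lemma psiAux_mono : Monotone (psiAux P Q) := by
  intro s t hst
  rcases le_or_gt 0 s with hs | hs
  · rw [psiAux, if_pos hs, psiAux, if_pos (le_trans hs hst)]
    exact phiAux_mono hP hPQ hs hst
  · rcases le_or_gt 0 t with ht | ht
    · rw [psiAux, if_neg (not_le.mpr hs), psiAux, if_pos ht]
      have h1 : 0 ≤ phiAux P Q (-s) := phiAux_nonneg (by linarith)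
      have h2 : 0 ≤ phiAux P Q t := phiAux_nonneg ht
      linarith
    · rw [psiAux, if_neg (not_le.mpr hs), psiAux, if_neg (not_le.mpr ht)]
      have := phiAux_mono hP hPQ (by linarith : (0:ℝ) ≤ -t) (by linarith : -t ≤ -s)
      linarith

include hP hPQ in
lemma psiAux_gap_aux {s t : ℝ} (hst : s ≤ t) (h0 : 0 ≤ s + t) :
    min (((t - s)/2) ^ P) (((t - s)/2) ^ Q) ≤ psiAux P Q t - psiAux P Q s := by
  set u : ℝ := (s + t)/2 with hu
  set δ : ℝ := (t - s)/2 with hδ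
  have hu0 : 0 ≤ u := by rw [hu]; linarith
  have hδ0 : 0 ≤ δ := by rw [hδ]; linarith
  have h1 : psiAux P Q s ≤ psiAux P Q u := psiAux_mono hP hPQ (show s ≤ u by rw [hu]; linarith)
  have h2 : psiAux P Q u = phiAux P Q u := if_pos hu0
  have h3 : psiAux P Q t = phiAux P Q (u + δ) := by
    rw [psiAux, if_pos (by linarith : (0:ℝ) ≤ t)]
    congr 1
    rw [hu, hδ]; ring
  have h4 := phiAux_add hP hPQ hu0 hδ0
  rw [h3]
  linarith [h1, h2 ▸ h1]

include hP hPQ in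
lemma psiAux_gap (hQ : Q ≠ 0) {s t : ℝ} (hst : s ≤ t) :
    min (((t - s)/2) ^ P) (((t - s)/2) ^ Q) ≤ psiAux P Q t - psiAux P Q s := by
  rcases le_or_gt 0 (s + t) with h | h
  · exact psiAux_gap_aux hP hPQ hst h
  · have := psiAux_gap_aux hP hPQ (by linarith : -t ≤ -s) (by linarith)
    rw [psiAux_neg hQ, psiAux_neg hQ] at this
    have he : -s - -t = t - s := by ring
    rw [he] at this
    linarith

end aux

theorem stmt2 (p q a b c : ℝ) (hp : 2 < p) (hpq : p < q)
    (hc : 0 < c) (habc : a + b = c) (hapcq : a * p = c * q)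
    (f : ℝ → ℝ)
    (hf₁ : ∀ x : ℝ, 1 < x → f x = a * x ^ p + b)
    (hf₂ : ∀ x : ℝ, 0 ≤ x → x ≤ 1 → f x = c * x ^ q)
    (fhat : ℝ → ℝ) (hfhat : ∀ x : ℝ, fhat x = f |x|) :
    ∃ K > (0:ℝ), ∀ x y : ℝ,
      fhat x - fhat y - deriv fhat y * (x - y) ≥ K * min (|x - y| ^ p) (|x - y| ^ q) := by
  have hq : 2 < q := lt_trans hp hpq
  have hP : 1 ≤ p - 1 := by linarith
  have hPQ : p - 1 ≤ q - 1 := by linarith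
  have hQ0 : q - 1 ≠ 0 := by linarith
  have hcq : 0 < c * q := mul_pos hc (by linarith)
  have ha : 0 < a := by nlinarith
  set D : ℝ → ℝ := fun t => c * q * psiAux (p-1) (q-1) t with hDdef
  have he1 : ∀ x : ℝ, |x| ≤ 1 → fhat x = c * |x| ^ q := fun x hx => by
    rw [hfhat]; exact hf₂ _ (abs_nonneg x) hx
  have he2 : ∀ x : ℝ, 1 < |x| → fhat x = a * |x| ^ p + b := fun x hx => by
    rw [hfhat]; exact hf₁ _ hx
  have hfe : ∀ x : ℝ, fhat (-x) = fhat x := fun x => by rw [hfhat, hfhat, abs_neg]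
  have hf0 : fhat 0 = 0 := by
    rw [he1 0 (by norm_num)]
    simp [Real.zero_rpow (show q ≠ 0 by linarith)]
  -- derivative at positive points
  have hDpos : ∀ y : ℝ, 0 < y → HasDerivAt fhat (D y) y := by
    intro y hy0
    rcases lt_trichotomy y 1 with hy1 | hy1 | hy1
    · have hq' : HasDerivAt (fun x : ℝ => c * x ^ q) (c * (q * y ^ (q-1))) y :=
        (Real.hasDerivAt_rpow_const (Or.inl hy0.ne')).const_mul c
      have heq : fhat =ᶠ[nhds y] (fun x : ℝ => c * x ^ q) := by
        filter_upwards [Ioo_mem_nhds hy0 hy1] with x hx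
        rw [he1 x (by rw [abs_of_pos hx.1]; exact hx.2.le), abs_of_pos hx.1]
      have h := hq'.congr_of_eventuallyEq heq
      refine h.congr_deriv ?_
      simp only [hDdef, psiAux, if_pos hy0.le, phiAux, if_pos hy1.le]
      ring
    · subst hy1
      have hI1 : HasDerivWithinAt fhat (c * q) (Icc 0 1) 1 := by
        have h1 : HasDerivAt (fun x : ℝ => c * x ^ q) (c * (q * (1:ℝ) ^ (q-1))) 1 :=
          (Real.hasDerivAt_rpow_const (Or.inl one_ne_zero)).const_mul c
        have h2 := (h1.hasDerivWithinAt (s := Icc 0 1)).congr (f₁ := fhat)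
          (fun z hz => by rw [he1 z (by rw [abs_of_nonneg hz.1]; exact hz.2),
            abs_of_nonneg hz.1])
          (by rw [he1 1 (by norm_num)]; norm_num)
        refine h2.congr_deriv ?_
        rw [Real.one_rpow]; ring
      have hI2 : HasDerivWithinAt fhat (c * q) (Ici 1) 1 := by
        have h1 : HasDerivAt (fun x : ℝ => a * x ^ p + b) (a * (p * (1:ℝ) ^ (p-1))) 1 :=
          ((Real.hasDerivAt_rpow_const (Or.inl one_ne_zero)).const_mul a).add_const b
        have hval : ∀ z ∈ Ici (1:ℝ), fhat z = a * z ^ p + b := by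
          intro z hz
          rcases eq_or_lt_of_le (Set.mem_Ici.mp hz) with h | h
          · rw [← h, he1 1 (by norm_num)]
            simp only [abs_one, Real.one_rpow, Real.one_rpow]
            linarith
          · rw [he2 z (by rw [abs_of_pos (by linarith)]; exact h),
              abs_of_pos (by linarith : (0:ℝ) < z)]
        have h2 := (h1.hasDerivWithinAt (s := Ici 1)).congr (f₁ := fhat)
          hval (hval 1 (by norm_num))
        refine h2.congr_deriv ?_
        rw [Real.one_rpow]
        rw [show a * (p * 1) = a * p by ring, hapcq]
      have h3 : HasDerivWithinAt fhat (c * q) (Icc 0 1 ∪ Ici 1) 1 := hI1.union hI2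
      rw [Set.Icc_union_Ici_eq_Ici (by norm_num : (0:ℝ) ≤ 1)] at h3
      have h4 := h3.hasDerivAt (Ici_mem_nhds one_pos)
      refine h4.congr_deriv ?_
      simp only [hDdef, psiAux, if_pos (by norm_num : (0:ℝ) ≤ 1), phiAux,
        if_pos (le_refl (1:ℝ)), Real.one_rpow]
      ring
    · have hq' : HasDerivAt (fun x : ℝ => a * x ^ p + b) (a * (p * y ^ (p-1))) y :=
        ((Real.hasDerivAt_rpow_const (Or.inl hy0.ne')).const_mul a).add_const b
      have heq : fhat =ᶠ[nhds y] (fun x : ℝ => a * x ^ p + b) := by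
        filter_upwards [Ioi_mem_nhds hy1] with x hx
        have hx' : (1:ℝ) < x := hx
        rw [he2 x (by rw [abs_of_pos (by linarith : (0:ℝ) < x)]; exact hx'),
          abs_of_pos (by linarith : (0:ℝ) < x)]
      have h := hq'.congr_of_eventuallyEq heq
      refine h.congr_deriv ?_
      simp only [hDdef, psiAux, if_pos hy0.le, phiAux, if_neg (not_le.mpr hy1)]
      rw [show a * (p * y ^ (p-1)) = (a * p) * y ^ (p-1) by ring, hapcq]
  -- derivative at 0
  have hD0 : HasDerivAt fhat 0 0 := by
    rw [hasDerivAt_iff_tendsto_slope]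
    have hb : ∀ᶠ x in nhdsWithin (0:ℝ) {(0:ℝ)}ᶜ, ‖slope fhat 0 x‖ ≤ c * |x| ^ (q - 1) := by
      filter_upwards [self_mem_nhdsWithin,
        nhdsWithin_le_nhds (Ioo_mem_nhds (by norm_num : (-1:ℝ) < 0) one_pos)] with x hx0 hx1
      have hx0' : x ≠ 0 := hx0
      have hxa : |x| ≤ 1 := (abs_lt.mpr ⟨hx1.1, hx1.2⟩).le
      have hxpos : 0 < |x| := abs_pos.mpr hx0'
      rw [slope_def_field, he1 x hxa, hf0, sub_zero, sub_zero, Real.norm_eq_abs,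
        abs_div, abs_of_nonneg (by positivity : (0:ℝ) ≤ c * |x| ^ q)]
      have heq : c * |x| ^ q / |x| = c * |x| ^ (q - 1) := by
        rw [Real.rpow_sub hxpos, Real.rpow_one]; ring
      exact le_of_eq heq
    have hcont : ContinuousAt (fun x : ℝ => c * |x| ^ (q - 1)) 0 :=
      continuousAt_const.mul
        ((Real.continuousAt_rpow_const _ _ (Or.inr (by linarith))).comp
          continuous_abs.continuousAt)
    have hg : Tendsto (fun x : ℝ => c * |x| ^ (q-1)) (nhdsWithin (0:ℝ) {(0:ℝ)}ᶜ) (nhds 0) := by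
      have h := hcont.tendsto
      simp only [abs_zero, Real.zero_rpow hQ0, mul_zero] at h
      exact h.mono_left nhdsWithin_le_nhds
    exact squeeze_zero_norm' hb hg
  -- derivative everywhere
  have hD : ∀ y : ℝ, HasDerivAt fhat (D y) y := by
    intro y
    rcases lt_trichotomy y 0 with hy | hy | hy
    · have H := hDpos (-y) (by linarith)
      have H2 : HasDerivAt (fun x : ℝ => fhat (-x)) (D (-y) * (-1)) y :=
        H.comp y (hasDerivAt_neg' y)
      have hfun : (fun x : ℝ => fhat (-x)) = fhat := funext hfe
      rw [hfun] at H2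
      convert H2 using 1
      simp only [hDdef, psiAux_neg hQ0]
      ring
    · subst hy
      convert hD0 using 1
      simp only [hDdef, psiAux, if_pos (le_refl (0:ℝ)), phiAux_zero hQ0]
      ring
    · exact hDpos y hy
  -- setup constants and integrability
  have hmono : Monotone D := (psiAux_mono hP hPQ).const_mul hcq.le
  have hint : ∀ u v : ℝ, IntervalIntegrable D MeasureTheory.volume u v := fun u v =>
    (hmono.monotoneOn _).intervalIntegrable
  set K : ℝ := c * q * ((4:ℝ) ^ q)⁻¹ with hK
  have h4q : (0:ℝ) < (4:ℝ) ^ q := Real.rpow_pos_of_pos (by norm_num) q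
  have hK0 : 0 < K := by rw [hK]; positivity
  -- key inequality for y ≤ x
  have key : ∀ x y : ℝ, y ≤ x →
      K * min (|x - y| ^ p) (|x - y| ^ q) ≤ fhat x - fhat y - D y * (x - y) := by
    intro x y hyx
    rcases eq_or_lt_of_le hyx with heq | hlt
    · subst heq
      simp [Real.zero_rpow (show p ≠ 0 by linarith), Real.zero_rpow (show q ≠ 0 by linarith)]
    · set r : ℝ := x - y with hr
      have hr0 : 0 < r := by rw [hr]; linarith
      set m : ℝ := (x + y)/2 with hm
      have hym : y ≤ m := by rw [hm]; linarith
      have hmx : m ≤ x := by rw [hm]; linarith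
      have hFTC : ∫ t in y..x, D t = fhat x - fhat y :=
        intervalIntegral.integral_eq_sub_of_hasDerivAt (fun t _ => hD t) (hint y x)
      have hsub : ∀ u v : ℝ, IntervalIntegrable (fun t => D t - D y)
          MeasureTheory.volume u v :=
        fun u v => (hint u v).sub intervalIntegrable_const
      have hsplit : (∫ t in y..m, D t - D y) + (∫ t in m..x, D t - D y)
          = ∫ t in y..x, D t - D y :=
        intervalIntegral.integral_add_adjacent_intervals (hsub y m) (hsub m x)
      have hval : (∫ t in y..x, D t - D y) = fhat x - fhat y - D y * (x - y) := by
        rw [intervalIntegral.integral_sub (hint y x) intervalIntegrable_const,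
          hFTC, intervalIntegral.integral_const, smul_eq_mul]
        ring
      have h1 : 0 ≤ ∫ t in y..m, D t - D y :=
        intervalIntegral.integral_nonneg hym
          (fun u hu => sub_nonneg.mpr (hmono hu.1))
      set M : ℝ := min ((r/4) ^ (p-1)) ((r/4) ^ (q-1)) with hM
      have hr4 : (0:ℝ) ≤ r/4 := by linarith
      have hM0 : 0 ≤ M :=
        le_min (Real.rpow_nonneg hr4 _) (Real.rpow_nonneg hr4 _)
      have h2 : ∀ t ∈ Icc m x, c * q * M ≤ D t - D y := by
        intro t ht
        have hty : y ≤ t := le_trans hym ht.1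
        have hgap := psiAux_gap hP hPQ hQ0 hty
        have h4 : r/4 ≤ (t - y)/2 := by
          have := ht.1
          rw [hm] at this
          rw [hr]
          linarith
        have hminmono : M ≤ min (((t-y)/2) ^ (p-1)) (((t-y)/2) ^ (q-1)) := by
          apply le_min
          · exact (min_le_left _ _).trans (Real.rpow_le_rpow hr4 h4 (by linarith))
          · exact (min_le_right _ _).trans (Real.rpow_le_rpow hr4 h4 (by linarith))
        have hMg : M ≤ psiAux (p-1) (q-1) t - psiAux (p-1) (q-1) y :=
          le_trans hminmono hgap
        have := mul_le_mul_of_nonneg_left hMg hcq.le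
        calc c * q * M ≤ c * q * (psiAux (p-1) (q-1) t - psiAux (p-1) (q-1) y) := this
          _ = D t - D y := by simp only [hDdef]; ring
      have h2' : (x - m) • (c * q * M) ≤ ∫ t in m..x, D t - D y := by
        have := intervalIntegral.integral_mono_on hmx
          intervalIntegrable_const (hsub m x) h2
        rwa [intervalIntegral.integral_const] at this
      have hxm : x - m = r/2 := by rw [hm, hr]; ring
      rw [hxm, smul_eq_mul] at h2'
      have hsum : (r/2) * (c * q * M) ≤ fhat x - fhat y - D y * (x - y) := by
        rw [← hval, ← hsplit]
        linarith
      refine le_trans ?_ hsum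
      have habs : |x - y| = r := by rw [← hr]; exact abs_of_pos hr0
      rw [habs]
      have e1 : (r/4) ^ p = (r/4) * (r/4) ^ (p-1) := by
        rw [show p = 1 + (p-1) by ring, Real.rpow_add (by linarith : (0:ℝ) < r/4),
          Real.rpow_one]
        ring_nf
      have e2 : (r/4) ^ q = (r/4) * (r/4) ^ (q-1) := by
        rw [show q = 1 + (q-1) by ring, Real.rpow_add (by linarith : (0:ℝ) < r/4),
          Real.rpow_one]
        ring_nf
      have hstep1 : ((4:ℝ) ^ q)⁻¹ * min (r ^ p) (r ^ q) ≤ min ((r/4) ^ p) ((r/4) ^ q) := by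
        have h4pq : (4:ℝ) ^ p ≤ (4:ℝ) ^ q :=
          Real.rpow_le_rpow_of_exponent_le (by norm_num) (le_of_lt hpq)
        have h4p : (0:ℝ) < (4:ℝ) ^ p := Real.rpow_pos_of_pos (by norm_num) p
        apply le_min
        · have : (r/4) ^ p = r ^ p / (4:ℝ) ^ p := by
            rw [Real.div_rpow hr0.le (by norm_num : (0:ℝ) ≤ 4)]
          rw [this]
          have hrp : (0:ℝ) ≤ r ^ p := Real.rpow_nonneg hr0.le _
          calc ((4:ℝ) ^ q)⁻¹ * min (r ^ p) (r ^ q) ≤ ((4:ℝ) ^ q)⁻¹ * r ^ p :=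
                mul_le_mul_of_nonneg_left (min_le_left _ _) (by positivity)
            _ ≤ ((4:ℝ) ^ p)⁻¹ * r ^ p := by
                apply mul_le_mul_of_nonneg_right _ hrp
                exact inv_anti₀ h4p h4pq
            _ = r ^ p / (4:ℝ) ^ p := by ring
        · have : (r/4) ^ q = r ^ q / (4:ℝ) ^ q := by
            rw [Real.div_rpow hr0.le (by norm_num : (0:ℝ) ≤ 4)]
          rw [this]
          have hrq : (0:ℝ) ≤ r ^ q := Real.rpow_nonneg hr0.le _
          calc ((4:ℝ) ^ q)⁻¹ * min (r ^ p) (r ^ q) ≤ ((4:ℝ) ^ q)⁻¹ * r ^ q :=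
                mul_le_mul_of_nonneg_left (min_le_right _ _) (by positivity)
            _ = r ^ q / (4:ℝ) ^ q := by ring
      have hstep2 : min ((r/4) ^ p) ((r/4) ^ q) ≤ (r/2) * M := by
        have hle : min ((r/4) ^ p) ((r/4) ^ q) ≤ (r/4) * M := by
          rw [hM]
          rcases le_total ((r/4) ^ (p-1)) ((r/4) ^ (q-1)) with h | h
          · rw [min_eq_left h]
            exact le_trans (min_le_left _ _) (le_of_eq e1)
          · rw [min_eq_right h]
            exact le_trans (min_le_right _ _) (le_of_eq e2)
        refine le_trans hle ?_
        apply mul_le_mul_of_nonneg_right _ hM0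
        linarith
      calc K * min (r ^ p) (r ^ q)
          = (c * q) * (((4:ℝ) ^ q)⁻¹ * min (r ^ p) (r ^ q)) := by rw [hK]; ring
        _ ≤ (c * q) * ((r/2) * M) :=
            mul_le_mul_of_nonneg_left (le_trans hstep1 hstep2) hcq.le
        _ = (r/2) * (c * q * M) := by ring
  refine ⟨K, hK0, fun x y => ?_⟩
  rw [(hD y).deriv]
  rcases le_total y x with h | h
  · exact key x y h
  · have hkey := key (-x) (-y) (by linarith)
    rw [hfe, hfe] at hkey
    have hDneg : D (-y) = - D y := by
      simp only [hDdef, psiAux_neg hQ0]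
      ring
    rw [hDneg] at hkey
    have h1 : -D y * (-x - -y) = D y * (x - y) := by ring
    rw [h1] at hkey
    have h2 : |-x - -y| = |x - y| := by
      rw [show -x - -y = -(x - y) by ring, abs_neg]
    rw [h2] at hkey
    exact hkey
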